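/- Let G be a topological group, H a complex Hilbert space, ρ a continuous representation of G on H, K a subgroup of G, and let H^K = {v ∈ H : ρ(k)v = v for all k ∈ K} denote the space of K-fixed vectors. Assume: (i) H^K is nonzero and finite-dimensional; (ii) H is the smallest closed ρ-invariant subspace containing H^K (i.e. H is the closed linear span of {ρ(g)v : g ∈ G, v ∈ H^K}); and (iii) there is a bounded linear operator P : H → H with P ∘ P = P, with range equal to H^K, and with P(U) ⊆ U for every closed ρ-invariant subspace U of H. Then there exists a closed ρ-invariant subspace U ⊊ H such that there is no closed ρ-invariant subspace E with U ⊊ E ⊊ H; that is, the quotient representation H/U is irreducible. -/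

import Mathlib

/-- The submodule of vectors fixed by every operator `ρ(k)`, `k ∈ K`. -/
def fixedVectorsOf {G H : Type*} [Group G]
    [NormedAddCommGroup H] [InnerProductSpace ℂ H]
    (ρ : G →* (H →L[ℂ] H)ˣ) (K : Subgroup G) : Submodule ℂ H where
  carrier := {v : H | ∀ k ∈ K, (ρ k : H →L[ℂ] H) v = v}
  zero_mem' := by intro k hk; simp
  add_mem' := by intro a b ha hb k hk; simp [ha k hk, hb k hk]
  smul_mem' := by intro c a ha k hk; simp [ha k hk]

/-- A closed subspace invariant under the representation. -/
def IsClosedInvariantSubspace {G H : Type*} [Group G]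
    [NormedAddCommGroup H] [InnerProductSpace ℂ H]
    (ρ : G →* (H →L[ℂ] H)ˣ) (U : Submodule ℂ H) : Prop :=
  IsClosed (U : Set H) ∧ ∀ g : G, ∀ v ∈ U, (ρ g : H →L[ℂ] H) v ∈ U

/-- If `H^K` is nonzero and finite dimensional, `H` is generated by
`H^K` as a closed invariant subspace, and there is a bounded projection `P` onto
`H^K` preserving every closed invariant subspace, then `H` has a maximal proper
closed invariant subspace `U`, i.e. `H/U` is irreducible. -/
theorem maximal_proper_invariant_subspace_exists
    {G : Type*} [Group G] [TopologicalSpace G] [IsTopologicalGroup G]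
    {H : Type*} [NormedAddCommGroup H] [InnerProductSpace ℂ H] [CompleteSpace H]
    (ρ : G →* (H →L[ℂ] H)ˣ)
    (hcont : Continuous fun p : G × H => (ρ p.1 : H →L[ℂ] H) p.2)
    (K : Subgroup G)
    (hne : fixedVectorsOf ρ K ≠ ⊥)
    (hfd : FiniteDimensional ℂ ↥(fixedVectorsOf ρ K))
    (hgen : (Submodule.span ℂ
        {w : H | ∃ g : G, ∃ v ∈ fixedVectorsOf ρ K,
          w = (ρ g : H →L[ℂ] H) v}).topologicalClosure = ⊤)
    (P : H →L[ℂ] H)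
    (hPproj : P.comp P = P)
    (hPrange : Set.range P = (fixedVectorsOf ρ K : Set H))
    (hPpres : ∀ U : Submodule ℂ H, IsClosedInvariantSubspace ρ U →
      ∀ v ∈ U, P v ∈ U) :
    ∃ U : Submodule ℂ H, IsClosedInvariantSubspace ρ U ∧ U ≠ ⊤ ∧
      ¬∃ E : Submodule ℂ H, IsClosedInvariantSubspace ρ E ∧ U < E ∧ E < ⊤ := by
  classical
  set HK := fixedVectorsOf ρ K with hHK
  -- P fixes every element of HK
  have hPfix : ∀ v ∈ HK, P v = v := by
    intro v hv
    have : v ∈ Set.range P := by rw [hPrange]; exact hv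
    obtain ⟨w, rfl⟩ := this
    calc P (P w) = (P.comp P) w := rfl
    _ = P w := by rw [hPproj]
  -- P maps into HK
  have hPmem : ∀ v : H, P v ∈ HK := by
    intro v
    have : P v ∈ Set.range P := ⟨v, rfl⟩
    rwa [hPrange] at this
  obtain ⟨b, hbHK, hb0⟩ := Submodule.exists_mem_ne_zero_of_ne_bot hne
  have : Nontrivial H := nontrivial_of_ne b 0 hb0
  set S : Set (Submodule ℂ H) := {U | IsClosedInvariantSubspace ρ U ∧ U ≠ ⊤} with hS
  have hbot : (⊥ : Submodule ℂ H) ∈ S := by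
    refine ⟨⟨by simp [Submodule.bot_coe, isClosed_singleton], ?_⟩, bot_ne_top⟩
    intro g v hv
    rw [Submodule.mem_bot] at hv ⊢
    rw [hv, map_zero]
  have ih : ∀ c ⊆ S, IsChain (· ≤ ·) c → ∀ y ∈ c, ∃ ub ∈ S, ∀ z ∈ c, z ≤ ub := by
    intro c hcS hchain y hy
    have hcne : c.Nonempty := ⟨y, hy⟩
    have hdir : DirectedOn (· ≤ ·) c := hchain.directedOn
    set V : Submodule ℂ H := sSup c with hV
    have hmemV : ∀ {z : H}, z ∈ V ↔ ∃ U ∈ c, z ∈ U := fun {z} =>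
      Submodule.mem_sSup_of_directed hcne hdir
    set Ucl : Submodule ℂ H := V.topologicalClosure with hUcl
    have hUclosed : IsClosed (Ucl : Set H) := Submodule.isClosed_topologicalClosure V
    -- invariance of Ucl
    have hinv : ∀ g : G, ∀ v ∈ Ucl, (ρ g : H →L[ℂ] H) v ∈ Ucl := by
      intro g v hv
      have himg : (ρ g : H →L[ℂ] H) '' (V : Set H) ⊆ (V : Set H) := by
        rintro _ ⟨u, hu, rfl⟩
        obtain ⟨U, hUc, huU⟩ := hmemV.mp hu
        exact Submodule.mem_sSup_of_mem hUc ((hcS hUc).1.2 g u huU)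
      have h1 : (ρ g : H →L[ℂ] H) v ∈ (ρ g : H →L[ℂ] H) '' closure (V : Set H) :=
        ⟨v, hv, rfl⟩
      have h2 := image_closure_subset_closure_image (ρ g : H →L[ℂ] H).continuous (s := (V : Set H)) h1
      exact closure_mono himg h2
    -- properness of Ucl
    have hne_top : Ucl ≠ ⊤ := by
      intro htop
      -- HK is not contained in V
      have hHKnotle : ¬ HK ≤ V := by
        intro hle
        have hfg : HK.FG := (Submodule.fg_iff_finiteDimensional HK).mpr hfd
        have hcompact := (Submodule.fg_iff_compact HK).mp hfg
        obtain ⟨U, hUc, hHKU⟩ :=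
          ((CompleteLattice.isCompactElement_iff_le_of_directed_sSup_le (Submodule ℂ H) HK).mp hcompact)
            c hcne hdir hle
        -- then U contains the generating set, hence is all of H
        have hgenU : {w : H | ∃ g : G, ∃ v ∈ HK, w = (ρ g : H →L[ℂ] H) v} ⊆ (U : Set H) := by
          rintro w ⟨g, v, hvHK, rfl⟩
          exact (hcS hUc).1.2 g v (hHKU hvHK)
        have hspan := Submodule.span_le.mpr hgenU
        have := Submodule.topologicalClosure_minimal _ hspan (hcS hUc).1.1
        rw [hgen] at this
        exact (hcS hUc).2 (top_le_iff.mp this)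
      obtain ⟨v, hvHK, hvV⟩ : ∃ v ∈ HK, v ∉ V := by
        by_contra hcon
        push_neg at hcon
        exact hHKnotle hcon
      -- W := V ⊓ HK is closed and contains P '' V
      set W : Submodule ℂ H := V ⊓ HK with hW
      have hWfd : FiniteDimensional ℂ W :=
        Submodule.finiteDimensional_of_le (inf_le_right : W ≤ HK)
      have hWclosed : IsClosed (W : Set H) := Submodule.closed_of_finiteDimensional W
      have hPimg : P '' (V : Set H) ⊆ (W : Set H) := by
        rintro _ ⟨u, hu, rfl⟩
        obtain ⟨U, hUc, huU⟩ := hmemV.mp hu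
        have hPU : P u ∈ U := hPpres U (hcS hUc).1 u huU
        exact ⟨Submodule.mem_sSup_of_mem hUc hPU, hPmem u⟩
      have hvTop : v ∈ Ucl := htop ▸ Submodule.mem_top
      have h1 : P v ∈ P '' closure (V : Set H) := ⟨v, hvTop, rfl⟩
      have h2 := image_closure_subset_closure_image P.continuous (s := (V : Set H)) h1
      have h3 : P v ∈ closure (W : Set H) := closure_mono hPimg h2
      rw [hWclosed.closure_eq] at h3
      rw [hPfix v hvHK] at h3
      exact hvV h3.1
    refine ⟨Ucl, ⟨⟨hUclosed, hinv⟩, hne_top⟩, ?_⟩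
    intro z hz
    exact fun x hx => Submodule.le_topologicalClosure V (Submodule.mem_sSup_of_mem hz hx)
  obtain ⟨m, -, hm⟩ := zorn_le_nonempty₀ S ih ⊥ hbot
  refine ⟨m, hm.1.1, hm.1.2, ?_⟩
  rintro ⟨E, hEinv, hmE, hEtop⟩
  have : E ≤ m := hm.2 ⟨hEinv, hEtop.ne⟩ hmE.le
  exact hmE.not_ge this
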